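/- Let k ≥ 2 be an integer, λ > 0, and let α∘, α• be real numbers with α∘ > α•. Let φ : ℝ → ℝ be a C² function with φ(t) = 1 for t ≤ 0, φ(t) = 0 for t ≥ 1, and 0 ≤ φ ≤ 1. Then there exists E₀ ∈ (0, 1) such that for every E ∈ (0, E₀] and every ρ > 0, writing φ_E(ρ) := 1 − φ(ρ/E − 1), one has λ·ρ^{−2}·(φ_E(ρ)·ρ^{α∘} + ρ^{α•}) − (φ_E''(ρ) + ((k−1)/ρ)·φ_E'(ρ))·ρ^{α∘} − 2·α∘·φ_E'(ρ)·ρ^{α∘−1} > 0. -/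

import Mathlib

set_option maxHeartbeats 2000000 in
/-- Positivity estimate (2.14) in Step 1 of Proposition 2.2 (Basic Deformations): the
transition from `Ψ∘ + Ψ•` to `Ψ•` via the cutoff `φ_E(ρ) = 1 − φ(ρ/E − 1)`, performed at
a sufficiently small radius `E`, keeps the scalar curvature expression positive. Here
`ρ ^ α` is the real power `Real.rpow`. -/
theorem transition_inward_positive (k : ℕ) (hk : 2 ≤ k) (lam : ℝ) (hlam : 0 < lam)
    (αo αb : ℝ) (hab : αb < αo)
    (φ : ℝ → ℝ) (hφ : ContDiff ℝ 2 φ)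
    (hφ0 : ∀ t : ℝ, t ≤ 0 → φ t = 1) (hφ1 : ∀ t : ℝ, 1 ≤ t → φ t = 0)
    (hφrange : ∀ t : ℝ, 0 ≤ φ t ∧ φ t ≤ 1) :
    ∃ E₀ : ℝ, 0 < E₀ ∧ E₀ < 1 ∧ ∀ E : ℝ, 0 < E → E ≤ E₀ → ∀ ρ : ℝ, 0 < ρ →
      0 < lam * ρ ^ (-2 : ℝ) * ((1 - φ (ρ / E - 1)) * ρ ^ αo + ρ ^ αb) -
          (deriv (deriv fun t : ℝ => 1 - φ (t / E - 1)) ρ +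
            ((k : ℝ) - 1) / ρ * deriv (fun t : ℝ => 1 - φ (t / E - 1)) ρ) * ρ ^ αo -
          2 * αo * deriv (fun t : ℝ => 1 - φ (t / E - 1)) ρ * ρ ^ (αo - 1) := by
  -- regularity facts
  have hφd : Differentiable ℝ φ := hφ.differentiable (by norm_num)
  have hψ1 : ContDiff ℝ 1 (deriv φ) := by
    have h : ContDiff ℝ ((1:ℕ)+1) φ := by exact_mod_cast hφ
    have := (contDiff_succ_iff_deriv.mp h).2.2
    exact_mod_cast this
  have hψd : Differentiable ℝ (deriv φ) := hψ1.differentiable (by norm_num)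
  have hψc : Continuous (deriv φ) := hψd.continuous
  have hψ'c : Continuous (deriv (deriv φ)) := (contDiff_one_iff_deriv.mp hψ1).2
  -- bounds on the derivatives on [0,1]
  obtain ⟨C₁, hC₁⟩ := (isCompact_Icc (a := (0:ℝ)) (b := 1)).exists_bound_of_continuousOn
    hψc.continuousOn
  obtain ⟨C₂, hC₂⟩ := (isCompact_Icc (a := (0:ℝ)) (b := 1)).exists_bound_of_continuousOn
    hψ'c.continuousOn
  have hC₁0 : 0 ≤ C₁ := le_trans (norm_nonneg _) (hC₁ 0 (by norm_num))
  have hC₂0 : 0 ≤ C₂ := le_trans (norm_nonneg _) (hC₂ 0 (by norm_num))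
  set M : ℝ := 4 * C₂ + 2 * ((k:ℝ) - 1) * C₁ + 4 * |αo| * C₁ with hM
  have hk1 : (1:ℝ) ≤ (k:ℝ) - 1 := by
    have : (2:ℝ) ≤ (k:ℝ) := by exact_mod_cast hk
    linarith
  have hM0 : 0 ≤ M := by
    have h1 : 0 ≤ 2 * ((k:ℝ) - 1) * C₁ := by positivity
    have h2 : 0 ≤ 4 * |αo| * C₁ := by positivity
    nlinarith
  have hM1 : (0:ℝ) < M + 1 := by linarith
  set B : ℝ := (lam / (M + 1)) ^ ((αo - αb)⁻¹ : ℝ) with hB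
  have hBpos : 0 < B := Real.rpow_pos_of_pos (by positivity) _
  refine ⟨min (1/2) (B/2), by positivity, lt_of_le_of_lt (min_le_left _ _) (by norm_num),
    fun E hE hEle ρ hρ => ?_⟩
  have hE2B : 2 * E ≤ B := by
    have := le_trans hEle (min_le_right _ _)
    linarith
  -- derivative of the inner function
  have hinner : ∀ t : ℝ, HasDerivAt (fun x : ℝ => x / E - 1) E⁻¹ t := by
    intro t
    simpa using ((hasDerivAt_id t).div_const E).sub_const 1
  -- first derivative of the cutoff, everywhere
  have hf' : ∀ t : ℝ, HasDerivAt (fun x : ℝ => 1 - φ (x / E - 1))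
      (-(deriv φ (t / E - 1) * E⁻¹)) t := by
    intro t
    exact (((hφd (t / E - 1)).hasDerivAt.comp t (hinner t))).const_sub 1
  have hderiv : (deriv fun t : ℝ => 1 - φ (t / E - 1))
      = fun t : ℝ => -(deriv φ (t / E - 1) * E⁻¹) := funext fun t => (hf' t).deriv
  have hD2 : deriv (deriv fun t : ℝ => 1 - φ (t / E - 1)) ρ
      = -(deriv (deriv φ) (ρ / E - 1) * E⁻¹ * E⁻¹) := by
    rw [hderiv]
    exact ((((hψd (ρ / E - 1)).hasDerivAt.comp ρ (hinner ρ))).mul_const E⁻¹).neg.deriv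
  rcases lt_or_ge ρ E with hlt | hge
  · -- region ρ < E : cutoff is constant 0 near ρ
    have hzero : ∀ t ∈ Set.Iio E, (fun x : ℝ => 1 - φ (x / E - 1)) t = 0 := by
      intro t ht
      have : t / E - 1 ≤ 0 := by
        have : t / E < 1 := (div_lt_one hE).mpr ht
        linarith
      simp [hφ0 _ this]
    have hmem : Set.Iio E ∈ nhds ρ := Iio_mem_nhds hlt
    have hev : (fun x : ℝ => 1 - φ (x / E - 1)) =ᶠ[nhds ρ] fun _ => (0:ℝ) :=
      Filter.eventually_of_mem hmem hzero
    have hd1 : deriv (fun t : ℝ => 1 - φ (t / E - 1)) ρ = 0 := by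
      rw [hev.deriv_eq]; simp
    have hdall : ∀ t ∈ Set.Iio E, deriv (fun x : ℝ => 1 - φ (x / E - 1)) t = 0 := by
      intro t ht
      have hev' : (fun x : ℝ => 1 - φ (x / E - 1)) =ᶠ[nhds t] fun _ => (0:ℝ) :=
        Filter.eventually_of_mem (Iio_mem_nhds ht) hzero
      rw [hev'.deriv_eq]; simp
    have hd2 : deriv (deriv fun t : ℝ => 1 - φ (t / E - 1)) ρ = 0 := by
      have hev' : (deriv fun x : ℝ => 1 - φ (x / E - 1)) =ᶠ[nhds ρ] fun _ => (0:ℝ) :=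
        Filter.eventually_of_mem hmem hdall
      rw [hev'.deriv_eq]; simp
    have hval : φ (ρ / E - 1) = 1 := by
      have : ρ / E - 1 ≤ 0 := by
        have : ρ / E < 1 := (div_lt_one hE).mpr hlt
        linarith
      exact hφ0 _ this
    rw [hd1, hd2, hval]
    have h1 : 0 < ρ ^ (-2:ℝ) := Real.rpow_pos_of_pos hρ _
    have h2 : 0 < ρ ^ αb := Real.rpow_pos_of_pos hρ _
    have : 0 < lam * ρ ^ (-2:ℝ) * ρ ^ αb := by positivity
    simp only [sub_self, zero_mul, zero_add, mul_zero, add_zero, sub_zero]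
    ring_nf
    nlinarith [this]
  · rcases le_or_gt ρ (2 * E) with hle2 | hgt2
    · -- transition region E ≤ ρ ≤ 2E
      set u : ℝ := ρ / E - 1 with hu
      have humem : u ∈ Set.Icc (0:ℝ) 1 := by
        have h1 : (1:ℝ) ≤ ρ / E := (one_le_div hE).mpr hge
        have h2 : ρ / E ≤ 2 := (div_le_iff₀ hE).mpr (by linarith)
        constructor
        · rw [hu]; linarith
        · rw [hu]; linarith
      have hb1 : |deriv φ u| ≤ C₁ := hC₁ u humem
      have hb2 : |deriv (deriv φ) u| ≤ C₂ := hC₂ u humem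
      set D1 : ℝ := -(deriv φ u * E⁻¹) with hD1def
      set D2 : ℝ := -(deriv (deriv φ) u * E⁻¹ * E⁻¹) with hD2def
      have hd1 : deriv (fun t : ℝ => 1 - φ (t / E - 1)) ρ = D1 := (hf' ρ).deriv
      have hd2 : deriv (deriv fun t : ℝ => 1 - φ (t / E - 1)) ρ = D2 := hD2
      have hρE : ρ / E ≤ 2 := (div_le_iff₀ hE).mpr (by linarith)
      have hY : |D1 * ρ| ≤ 2 * C₁ := by
        have heq : |D1 * ρ| = |deriv φ u| * (ρ / E) := by
          rw [hD1def, abs_mul, abs_neg, abs_mul,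
            abs_of_pos hρ, abs_of_pos (inv_pos.mpr hE)]
          ring
        rw [heq]
        calc |deriv φ u| * (ρ / E) ≤ C₁ * 2 :=
              mul_le_mul hb1 hρE (by positivity) hC₁0
          _ = 2 * C₁ := by ring
      have hX : |D2 * (ρ * ρ)| ≤ 4 * C₂ := by
        have heq : |D2 * (ρ * ρ)| = |deriv (deriv φ) u| * ((ρ / E) * (ρ / E)) := by
          rw [hD2def, abs_mul, abs_neg, abs_mul, abs_mul,
            abs_of_pos (mul_pos hρ hρ), abs_of_pos (inv_pos.mpr hE)]
          ring
        rw [heq]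
        have h4 : (ρ / E) * (ρ / E) ≤ 4 := by nlinarith [div_nonneg hρ.le hE.le]
        calc |deriv (deriv φ) u| * ((ρ / E) * (ρ / E)) ≤ C₂ * 4 :=
              mul_le_mul hb2 h4 (by positivity) hC₂0
          _ = 4 * C₂ := by ring
      -- the smallness bound from the choice of E₀
      have hρ2E₀ : ρ ≤ B := le_trans hle2 hE2B
      have hw : M + 1 ≤ lam * ρ ^ (αb - αo) := by
        have hexp : (0:ℝ) < αo - αb := by linarith
        have hpos : 0 < ρ ^ (αo - αb) := Real.rpow_pos_of_pos hρ _
        have h1 : ρ ^ (αo - αb) ≤ B ^ (αo - αb) :=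
          Real.rpow_le_rpow hρ.le hρ2E₀ hexp.le
        have h2 : B ^ (αo - αb) = lam / (M + 1) :=
          Real.rpow_inv_rpow (by positivity) (ne_of_gt hexp)
        have h3 : ρ ^ (αo - αb) ≤ lam / (M + 1) := h2 ▸ h1
        have h4 : (M + 1) * ρ ^ (αo - αb) ≤ lam := by
          have := mul_le_mul_of_nonneg_left h3 hM1.le
          calc (M + 1) * ρ ^ (αo - αb) ≤ (M + 1) * (lam / (M + 1)) := this
            _ = lam := by field_simp
        have h5 : ρ ^ (αb - αo) = (ρ ^ (αo - αb))⁻¹ := by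
          rw [show αb - αo = -(αo - αb) by ring, Real.rpow_neg hρ.le]
        rw [h5, ← div_eq_mul_inv, le_div_iff₀ hpos]
        exact h4
      -- rpow identities
      have hsq : ρ ^ (2:ℝ) = ρ * ρ := by
        rw [show (2:ℝ) = (1:ℝ) + 1 by norm_num, Real.rpow_add hρ, Real.rpow_one]
      have hRo : ρ ^ αo = ρ ^ (αo - 2:ℝ) * (ρ * ρ) := by
        calc ρ ^ αo = ρ ^ (αo - 2 + 2:ℝ) := by congr 1; ring
          _ = ρ ^ (αo - 2:ℝ) * ρ ^ (2:ℝ) := Real.rpow_add hρ _ _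
          _ = ρ ^ (αo - 2:ℝ) * (ρ * ρ) := by rw [hsq]
      have hRo1 : ρ ^ (αo - 1) = ρ ^ (αo - 2:ℝ) * ρ := by
        calc ρ ^ (αo - 1) = ρ ^ (αo - 2 + 1:ℝ) := by congr 1; ring
          _ = ρ ^ (αo - 2:ℝ) * ρ ^ (1:ℝ) := Real.rpow_add hρ _ _
          _ = ρ ^ (αo - 2:ℝ) * ρ := by rw [Real.rpow_one]
      have hRb : ρ ^ αb = ρ ^ (αb - αo:ℝ) * (ρ ^ (αo - 2:ℝ) * (ρ * ρ)) := by
        calc ρ ^ αb = ρ ^ (αb - αo + (αo - 2 + 2):ℝ) := by congr 1; ring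
          _ = ρ ^ (αb - αo:ℝ) * ρ ^ (αo - 2 + 2:ℝ) := Real.rpow_add hρ _ _
          _ = ρ ^ (αb - αo:ℝ) * (ρ ^ (αo - 2:ℝ) * ρ ^ (2:ℝ)) := by
              rw [Real.rpow_add hρ]
          _ = ρ ^ (αb - αo:ℝ) * (ρ ^ (αo - 2:ℝ) * (ρ * ρ)) := by rw [hsq]
      have hRm2 : ρ ^ (-2:ℝ) = (ρ * ρ)⁻¹ := by
        rw [show (-2:ℝ) = -(2:ℝ) by norm_num, Real.rpow_neg hρ.le, hsq]
      have ha : (0:ℝ) < ρ ^ (αo - 2:ℝ) := Real.rpow_pos_of_pos hρ _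
      rw [hd1, hd2]
      have key : lam * ρ ^ (-2 : ℝ) * ((1 - φ u) * ρ ^ αo + ρ ^ αb)
            - (D2 + ((k:ℝ) - 1) / ρ * D1) * ρ ^ αo - 2 * αo * D1 * ρ ^ (αo - 1)
          = ((1 - φ u) * lam + lam * ρ ^ (αb - αo:ℝ)
              - (D2 * (ρ * ρ) + ((k:ℝ) - 1) * (D1 * ρ) + 2 * αo * (D1 * ρ)))
            * ρ ^ (αo - 2:ℝ) := by
        rw [hRo, hRo1, hRb, hRm2]
        field_simp
        ring
      rw [key]
      have hs := (hφrange u).2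
      have hXle := (abs_le.mp hX).2
      have hYle := (abs_le.mp hY).2
      have hkY : ((k:ℝ) - 1) * (D1 * ρ) ≤ ((k:ℝ) - 1) * (2 * C₁) :=
        mul_le_mul_of_nonneg_left hYle (by linarith)
      have haY : 2 * αo * (D1 * ρ) ≤ 4 * |αo| * C₁ := by
        calc 2 * αo * (D1 * ρ) ≤ |2 * αo * (D1 * ρ)| := le_abs_self _
          _ = 2 * |αo| * |D1 * ρ| := by rw [abs_mul, abs_mul]; norm_num
          _ ≤ 2 * |αo| * (2 * C₁) :=
              mul_le_mul_of_nonneg_left hY (by positivity)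
          _ = 4 * |αo| * C₁ := by ring
      have hφu : 0 ≤ (1 - φ u) * lam := mul_nonneg (by linarith) hlam.le
      refine mul_pos ?_ ha
      have hMdef : M = 4 * C₂ + 2 * ((k:ℝ) - 1) * C₁ + 4 * |αo| * C₁ := hM
      linarith
    · -- region ρ > 2E : cutoff is constant 1 near ρ
      have hone : ∀ t ∈ Set.Ioi (2 * E), (fun x : ℝ => 1 - φ (x / E - 1)) t = 1 := by
        intro t ht
        have h2 : (2:ℝ) < t / E := by
          rw [lt_div_iff₀ hE]; linarith [Set.mem_Ioi.mp ht]
        have : (1:ℝ) ≤ t / E - 1 := by linarith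
        simp [hφ1 _ this]
      have hmem : Set.Ioi (2 * E) ∈ nhds ρ := Ioi_mem_nhds hgt2
      have hev : (fun x : ℝ => 1 - φ (x / E - 1)) =ᶠ[nhds ρ] fun _ => (1:ℝ) :=
        Filter.eventually_of_mem hmem hone
      have hd1 : deriv (fun t : ℝ => 1 - φ (t / E - 1)) ρ = 0 := by
        rw [hev.deriv_eq]; simp
      have hdall : ∀ t ∈ Set.Ioi (2 * E), deriv (fun x : ℝ => 1 - φ (x / E - 1)) t = 0 := by
        intro t ht
        have hev' : (fun x : ℝ => 1 - φ (x / E - 1)) =ᶠ[nhds t] fun _ => (1:ℝ) :=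
          Filter.eventually_of_mem (Ioi_mem_nhds ht) hone
        rw [hev'.deriv_eq]; exact deriv_const t 1
      have hd2 : deriv (deriv fun t : ℝ => 1 - φ (t / E - 1)) ρ = 0 := by
        have hev' : (deriv fun x : ℝ => 1 - φ (x / E - 1)) =ᶠ[nhds ρ] fun _ => (0:ℝ) :=
          Filter.eventually_of_mem hmem hdall
        rw [hev'.deriv_eq]; exact deriv_const ρ 0
      have hval : φ (ρ / E - 1) = 0 := by
        have h2 : (2:ℝ) < ρ / E := by rw [lt_div_iff₀ hE]; linarith
        exact hφ1 _ (by linarith)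
      rw [hd1, hd2, hval]
      have h1 : 0 < ρ ^ (-2:ℝ) := Real.rpow_pos_of_pos hρ _
      have h2 : 0 < ρ ^ αb := Real.rpow_pos_of_pos hρ _
      have h3 : 0 < ρ ^ αo := Real.rpow_pos_of_pos hρ _
      have : 0 < lam * ρ ^ (-2:ℝ) * ((1 - 0) * ρ ^ αo + ρ ^ αb) := by positivity
      simp only [zero_mul, mul_zero, add_zero, sub_zero]
      nlinarith [this]
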